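/- Let X be a real Banach space which is Gâteaux smooth in the sense that for every x ∈ X with ‖x‖ = 1 there is a unique x* ∈ X* with ‖x*‖ = 1 and x*(x) = 1, and let J : X → C(K) be a linear isometric embedding, where K is a compact Hausdorff space. Let J*(K) = {x* ∈ X* : there is t ∈ K with x*(x) = (Jx)(t) for all x ∈ X}. Then the unit sphere S_{X*} is contained in J*(K) ∪ (−J*(K)). Moreover, if X is infinite-dimensional, then B_{X*} = J*(K) ∪ (−J*(K)). -/

import Mathlib

open Metric NormedSpace

section EK


variable {X : Type*} [NormedAddCommGroup X] [NormedSpace ℝ X]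

/-- Ekeland-type variational lemma on the closed unit ball. -/
lemma ekeland_ball [CompleteSpace X] (φ : StrongDual ℝ X) {ε : ℝ} (hε : 0 < ε) :
    ∃ x₀ ∈ closedBall (0:X) 1, ∀ x ∈ closedBall (0:X) 1,
      φ x ≤ φ x₀ + ε * ‖x - x₀‖ := by
  set B : Set X := closedBall (0:X) 1 with hB
  set S : X → Set X := fun a => B ∩ {x | φ a + ε * ‖x - a‖ ≤ φ x} with hSdef
  have hmemS : ∀ a ∈ B, a ∈ S a := fun a ha => ⟨ha, by simp⟩
  have hSB : ∀ a, S a ⊆ B := fun a x hx => hx.1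
  have htrans : ∀ a b x, b ∈ S a → x ∈ S b → x ∈ S a := by
    rintro a b x ⟨hbB, hb⟩ ⟨hxB, hx⟩
    refine ⟨hxB, ?_⟩
    simp only [Set.mem_setOf_eq] at hb hx ⊢
    have h1 : ‖x - a‖ ≤ ‖x - b‖ + ‖b - a‖ := norm_sub_le_norm_sub_add_norm_sub x b a
    nlinarith [mul_le_mul_of_nonneg_left h1 hε.le]
  have hφb : ∀ a, ∀ x ∈ S a, φ x ≤ ‖φ‖ := by
    intro a x hx
    have hx1 : ‖x‖ ≤ 1 := mem_closedBall_zero_iff.mp (hSB a hx)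
    calc φ x ≤ |φ x| := le_abs_self _
    _ ≤ ‖φ‖ * ‖x‖ := φ.le_opNorm x
    _ ≤ ‖φ‖ * 1 := by nlinarith [norm_nonneg φ]
    _ = ‖φ‖ := mul_one _
  have hbdd : ∀ a, BddAbove (φ '' S a) := by
    intro a
    exact ⟨‖φ‖, by rintro v ⟨x, hx, rfl⟩; exact hφb a x hx⟩
  have H : ∀ (n : ℕ) (v : X), ∃ y : X, v ∈ B →
      y ∈ S v ∧ sSup (φ '' S v) - 1/(n+1) < φ y := by
    intro n v
    by_cases hv : v ∈ B
    · have hne : (φ '' S v).Nonempty := ⟨φ v, v, hmemS v hv, rfl⟩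
      obtain ⟨w, hw, hw'⟩ := exists_lt_of_lt_csSup hne
        (sub_lt_self _ (by positivity : (0:ℝ) < 1/(n+1)))
      obtain ⟨y, hy, rfl⟩ := hw
      exact ⟨y, fun _ => ⟨hy, hw'⟩⟩
    · exact ⟨v, fun h => absurd h hv⟩
  set a : ℕ → X := fun n => Nat.rec (0:X) (fun n prev => Classical.choose (H n prev)) n
    with hadef
  have haB : ∀ n, a n ∈ B := by
    intro n; induction n with
    | zero => exact mem_closedBall_self (zero_le_one : (0:ℝ) ≤ 1)
    | succ n ih =>
      have h := (Classical.choose_spec (H n (a n))) ih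
      exact hSB _ h.1
  have hstep : ∀ n : ℕ, a (n+1) ∈ S (a n) ∧ sSup (φ '' S (a n)) - 1/(n+1) < φ (a (n+1)) :=
    fun n => Classical.choose_spec (H n (a n)) (haB n)
  have hchain : ∀ n m, n ≤ m → a m ∈ S (a n) := by
    intro n m hnm
    induction hnm with
    | refl => exact hmemS _ (haB n)
    | step h ih => exact htrans _ _ _ ih (hstep _).1
  have hmono : Monotone fun n => φ (a n) := by
    apply monotone_nat_of_le_succ
    intro n
    have h := (hstep n).1.2
    simp only [Set.mem_setOf_eq] at h
    nlinarith [norm_nonneg (a (n+1) - a n)]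
  have hφcauchy : CauchySeq fun n => φ (a n) := by
    refine (tendsto_atTop_ciSup hmono ?_).cauchySeq
    exact ⟨‖φ‖, by rintro v ⟨n, rfl⟩; exact hφb _ _ (hmemS _ (haB n))⟩
  have hacauchy : CauchySeq a := by
    rw [Metric.cauchySeq_iff']
    intro δ hδ
    obtain ⟨N, hN⟩ := Metric.cauchySeq_iff'.mp hφcauchy (ε*δ) (by positivity)
    refine ⟨N, fun n hn => ?_⟩
    have h1 := (hchain N n hn).2
    simp only [Set.mem_setOf_eq] at h1
    have h2 := hN n hn
    rw [Real.dist_eq] at h2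
    rw [dist_eq_norm]
    nlinarith [le_abs_self (φ (a n) - φ (a N)), norm_nonneg (a n - a N)]
  obtain ⟨x₀, hx₀⟩ := cauchySeq_tendsto_of_complete hacauchy
  have hSclosed : ∀ b, IsClosed (S b) := by
    intro b
    refine IsClosed.inter isClosed_closedBall ?_
    refine isClosed_le ?_ φ.continuous
    exact continuous_const.add (continuous_const.mul ((continuous_id.sub continuous_const).norm))
  have hx₀S : ∀ n, x₀ ∈ S (a n) := fun n =>
    (hSclosed (a n)).mem_of_tendsto hx₀
      (Filter.eventually_atTop.mpr ⟨n, fun m hm => hchain n m hm⟩)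
  have hx₀B : x₀ ∈ B := (hx₀S 0).1
  refine ⟨x₀, hx₀B, fun x hx => ?_⟩
  by_contra hcon
  push_neg at hcon
  have hxS : x ∈ S x₀ := ⟨hx, le_of_lt hcon⟩
  have hxSn : ∀ n, x ∈ S (a n) := fun n => htrans _ _ _ (hx₀S n) hxS
  have hφx₀ : ∀ n, φ (a n) ≤ φ x₀ := by
    intro n
    have h := (hx₀S n).2
    simp only [Set.mem_setOf_eq] at h
    nlinarith [norm_nonneg (x₀ - a n)]
  have hkey : ∀ n : ℕ, φ x ≤ φ x₀ + 1/(n+1) := by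
    intro n
    have h1 : φ x ≤ sSup (φ '' S (a n)) := le_csSup (hbdd (a n)) ⟨x, hxSn n, rfl⟩
    have h2 := (hstep n).2
    linarith [hφx₀ (n+1)]
  have hfin : φ x ≤ φ x₀ := by
    refine le_of_forall_pos_le_add fun δ hδ => ?_
    obtain ⟨n, hn⟩ := exists_nat_one_div_lt hδ
    linarith [hkey n]
  nlinarith [norm_nonneg (x - x₀)]




lemma exists_support_near (φ : StrongDual ℝ X) (hφ : ‖φ‖ = 1) {ε : ℝ} (hε : 0 < ε) (hε1 : ε < 1)
    {x₀ : X} (hx₀B : x₀ ∈ closedBall (0:X) 1)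
    (hek : ∀ x ∈ closedBall (0:X) 1, φ x ≤ φ x₀ + ε * ‖x - x₀‖) :
    ‖x₀‖ = 1 ∧ ∃ g₀ : StrongDual ℝ X, ‖g₀‖ = 1 ∧ g₀ x₀ = 1 ∧ ‖g₀ - φ‖ ≤ 2 * ε := by
  set B : Set X := closedBall (0:X) 1 with hBdef
  -- the Bishop–Phelps cone
  set C : Set X := {c | ∃ r : ℝ, 0 ≤ r ∧ ∃ x ∈ B, c = r • (x - x₀)} with hCdef
  have hC0 : (0:X) ∈ C := ⟨0, le_refl 0, x₀, hx₀B, by simp⟩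
  have hCφ : ∀ c ∈ C, φ c ≤ ε * ‖c‖ := by
    rintro c ⟨r, hr, x, hx, rfl⟩
    have h1 := hek x hx
    have h2 : φ (r • (x - x₀)) = r * (φ x - φ x₀) := by
      rw [map_smul, map_sub, smul_eq_mul]
    rw [h2, norm_smul, Real.norm_eq_abs, abs_of_nonneg hr]
    nlinarith [mul_le_mul_of_nonneg_left h1 hr]
  have hCsmul : ∀ (r : ℝ), 0 ≤ r → ∀ c ∈ C, r • c ∈ C := by
    rintro r hr c ⟨r', hr', x, hx, rfl⟩
    exact ⟨r * r', mul_nonneg hr hr', x, hx, smul_smul r r' _⟩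
  have hCadd : ∀ c₁ ∈ C, ∀ c₂ ∈ C, c₁ + c₂ ∈ C := by
    rintro c₁ ⟨r₁, hr₁, x₁, hx₁, rfl⟩ c₂ ⟨r₂, hr₂, x₂, hx₂, rfl⟩
    rcases eq_or_lt_of_le (add_nonneg hr₁ hr₂) with h0 | h0
    · have e1 : r₁ = 0 := by linarith
      have e2 : r₂ = 0 := by linarith
      refine ⟨0, le_refl 0, x₀, hx₀B, by simp [e1, e2]⟩
    · set r := r₁ + r₂ with hrdef
      refine ⟨r, h0.le, (r₁/r) • x₁ + (r₂/r) • x₂, ?_, ?_⟩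
      · rw [mem_closedBall_zero_iff]
        calc ‖(r₁/r) • x₁ + (r₂/r) • x₂‖ ≤ ‖(r₁/r) • x₁‖ + ‖(r₂/r) • x₂‖ := norm_add_le _ _
        _ = (r₁/r) * ‖x₁‖ + (r₂/r) * ‖x₂‖ := by
            rw [norm_smul, norm_smul, Real.norm_eq_abs, Real.norm_eq_abs,
              abs_of_nonneg (by positivity), abs_of_nonneg (by positivity)]
        _ ≤ (r₁/r) * 1 + (r₂/r) * 1 := by
            have h1 := mem_closedBall_zero_iff.mp hx₁
            have h2 := mem_closedBall_zero_iff.mp hx₂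
            gcongr <;> positivity
        _ = 1 := by field_simp; exact hrdef.symm
      · have hrne : r ≠ 0 := h0.ne'
        match_scalars <;> field_simp [hrdef] <;> ring
  -- the sublinear functional
  set q : X → ℝ := fun z => ε * ‖z‖ + φ z with hqdef
  have hqadd : ∀ z₁ z₂, q (z₁ + z₂) ≤ q z₁ + q z₂ := by
    intro z₁ z₂
    simp only [hqdef, map_add]
    nlinarith [norm_add_le z₁ z₂]
  have hqhom : ∀ (r : ℝ), 0 ≤ r → ∀ z, q (r • z) = r * q z := by
    intro r hr z
    simp only [hqdef, map_smul, norm_smul, Real.norm_eq_abs, abs_of_nonneg hr, smul_eq_mul]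
    ring
  set p : X → ℝ := fun z => sInf ((fun c => q (z - c)) '' C) with hpdef
  have hqlb : ∀ z, ∀ c ∈ C, φ z - ε * ‖z‖ ≤ q (z - c) := by
    intro z c hc
    have h1 : φ c ≤ ε * ‖c‖ := hCφ c hc
    have h2 : ‖c‖ - ‖z‖ ≤ ‖z - c‖ := by
      rw [norm_sub_rev]; exact norm_sub_norm_le c z
    simp only [hqdef, map_sub]
    nlinarith
  have hne : ∀ z, ((fun c => q (z - c)) '' C).Nonempty := fun z => ⟨q (z - 0), 0, hC0, rfl⟩
  have hbdd : ∀ z, BddBelow ((fun c => q (z - c)) '' C) := by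
    intro z
    exact ⟨φ z - ε * ‖z‖, by rintro v ⟨c, hc, rfl⟩; exact hqlb z c hc⟩
  have hple : ∀ z, ∀ c ∈ C, p z ≤ q (z - c) := fun z c hc => csInf_le (hbdd z) ⟨c, hc, rfl⟩
  have hplb : ∀ z, φ z - ε * ‖z‖ ≤ p z := fun z => le_csInf (hne z) (by rintro v ⟨c, hc, rfl⟩; exact hqlb z c hc)
  have hpq : ∀ z, p z ≤ q z := fun z => by simpa using hple z 0 hC0
  have hpadd : ∀ z₁ z₂, p (z₁ + z₂) ≤ p z₁ + p z₂ := by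
    intro z₁ z₂
    have key : ∀ c₁ ∈ C, ∀ c₂ ∈ C, p (z₁ + z₂) ≤ q (z₁ - c₁) + q (z₂ - c₂) := by
      intro c₁ h₁ c₂ h₂
      have e : z₁ + z₂ - (c₁ + c₂) = (z₁ - c₁) + (z₂ - c₂) := by abel
      calc p (z₁ + z₂) ≤ q (z₁ + z₂ - (c₁ + c₂)) := hple _ _ (hCadd c₁ h₁ c₂ h₂)
      _ ≤ q (z₁ - c₁) + q (z₂ - c₂) := by rw [e]; exact hqadd _ _
    have step : ∀ c₁ ∈ C, p (z₁ + z₂) - q (z₁ - c₁) ≤ p z₂ := by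
      intro c₁ h₁
      refine le_csInf (hne z₂) ?_
      rintro v ⟨c₂, h₂, rfl⟩
      linarith [key c₁ h₁ c₂ h₂]
    have : p (z₁ + z₂) - p z₂ ≤ p z₁ := by
      refine le_csInf (hne z₁) ?_
      rintro v ⟨c₁, h₁, rfl⟩
      linarith [step c₁ h₁]
    linarith
  have hphom : ∀ (r : ℝ), 0 < r → ∀ z, p (r • z) = r * p z := by
    intro r hr z
    have le₁ : p (r • z) ≤ r * p z := by
      rw [← div_le_iff₀' hr]
      refine le_csInf (hne z) ?_
      rintro v ⟨c, hc, rfl⟩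
      show p (r • z) / r ≤ q (z - c)
      rw [div_le_iff₀' hr]
      calc p (r • z) ≤ q (r • z - r • c) := hple _ _ (hCsmul r hr.le c hc)
      _ = r * q (z - c) := by rw [← smul_sub, hqhom r hr.le]
    have le₂ : r * p z ≤ p (r • z) := by
      refine le_csInf (hne (r • z)) ?_
      rintro v ⟨c, hc, rfl⟩
      show r * p z ≤ q (r • z - c)
      have hc' : r⁻¹ • c ∈ C := hCsmul r⁻¹ (by positivity) c hc
      have e : r • z - c = r • (z - r⁻¹ • c) := by
        rw [smul_sub, smul_smul, mul_inv_cancel₀ hr.ne', one_smul]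
      rw [e, hqhom r hr.le]
      exact mul_le_mul_of_nonneg_left (hple z _ hc') hr.le
    linarith
  -- Hahn–Banach below the sublinear functional p
  obtain ⟨g, -, hg⟩ := exists_extension_of_le_sublinear ⟨⊥, 0⟩ p
    (fun c hc x => hphom c hc x) hpadd
    (by rintro ⟨x, hx⟩
        have hx0 : x = 0 := by simpa using hx
        have : p 0 = 0 := by
          have h1 := hplb 0
          have h2 := hpq 0
          simp only [hqdef] at h2
          simp only [map_zero, norm_zero, mul_zero, sub_zero] at h1 h2
          linarith
        simp [hx0, this])
  have hgq : ∀ z, g z ≤ ε * ‖z‖ + φ z := by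
    intro z
    have := (hg z).trans (hpq z)
    simpa [hqdef] using this
  have habs : ∀ z, |g z - φ z| ≤ ε * ‖z‖ := by
    intro z
    rw [abs_le]
    constructor
    · have := hgq (-z)
      simp only [map_neg, norm_neg] at this
      linarith
    · linarith [hgq z]
  set η : StrongDual ℝ X := LinearMap.mkContinuous g (ε + ‖φ‖) (by
    intro z
    have h1 := habs z
    have h2 : |φ z| ≤ ‖φ‖ * ‖z‖ := φ.le_opNorm z
    rw [Real.norm_eq_abs]
    calc |g z| ≤ |g z - φ z| + |φ z| := by
          have := abs_add_le (g z - φ z) (φ z); simpa using this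
    _ ≤ ε * ‖z‖ + ‖φ‖ * ‖z‖ := add_le_add h1 h2
    _ = (ε + ‖φ‖) * ‖z‖ := by ring) with hηdef
  have hηapp : ∀ z, η z = g z := fun z => rfl
  have hηφ : ‖η - φ‖ ≤ ε := by
    refine ContinuousLinearMap.opNorm_le_bound _ hε.le fun z => ?_
    rw [ContinuousLinearMap.sub_apply, Real.norm_eq_abs, hηapp]
    exact habs z
  have hcone : ∀ x ∈ B, η x ≤ η x₀ := by
    intro x hx
    have hmem : x - x₀ ∈ C := ⟨1, zero_le_one, x, hx, (one_smul ℝ _).symm⟩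
    have h1 : g (x - x₀) ≤ p (x - x₀) := hg _
    have h2 : p (x - x₀) ≤ q ((x - x₀) - (x - x₀)) := hple _ _ hmem
    have h3 : q ((x - x₀) - (x - x₀)) = 0 := by simp [hqdef]
    have h4 : g (x - x₀) = g x - g x₀ := map_sub g x x₀
    rw [hηapp, hηapp]
    linarith
  -- ‖x₀‖ = 1
  have hx₀1 : ‖x₀‖ ≤ 1 := mem_closedBall_zero_iff.mp hx₀B
  have hx₀norm : ‖x₀‖ = 1 := by
    by_contra hne'
    have hlt : ‖x₀‖ < 1 := lt_of_le_of_ne hx₀1 hne'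
    set δ : ℝ := 1 - ‖x₀‖ with hδdef
    have hδ : 0 < δ := by simp only [hδdef]; linarith
    have hclaim : ∀ z : X, φ z ≤ ε * ‖z‖ := by
      intro z
      rcases eq_or_ne z 0 with rfl | hz
      · simp
      · have hzn : 0 < ‖z‖ := norm_pos_iff.mpr hz
        set x : X := x₀ + (δ/‖z‖) • z with hxdef
        have hxB : x ∈ B := by
          rw [hBdef, mem_closedBall_zero_iff]
          calc ‖x‖ ≤ ‖x₀‖ + ‖(δ/‖z‖) • z‖ := norm_add_le _ _
          _ = ‖x₀‖ + δ := by
              rw [norm_smul, Real.norm_eq_abs, abs_of_nonneg (by positivity)]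
              field_simp
          _ = 1 := by simp [hδdef]
        have h1 := hek x hxB
        have h2 : x - x₀ = (δ/‖z‖) • z := by simp [hxdef]
        have h3 : φ x = φ x₀ + (δ/‖z‖) * φ z := by
          simp [hxdef, map_add, map_smul, smul_eq_mul]
        rw [h3, h2, norm_smul, Real.norm_eq_abs, abs_of_nonneg (by positivity)] at h1
        have h4 : (δ/‖z‖) * φ z ≤ ε * ((δ/‖z‖) * ‖z‖) := by linarith
        have h5 : (δ/‖z‖) * ‖z‖ = δ := by field_simp
        rw [h5] at h4
        have h6 : δ * φ z ≤ δ * (ε * ‖z‖) := by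
          calc δ * φ z = ‖z‖ * ((δ/‖z‖) * φ z) := by field_simp
          _ ≤ ‖z‖ * (ε * δ) := by
              apply mul_le_mul_of_nonneg_left _ hzn.le
              linarith
          _ = δ * (ε * ‖z‖) := by ring
        exact le_of_mul_le_mul_left (by linarith) hδ
    have : ‖φ‖ ≤ ε := by
      refine ContinuousLinearMap.opNorm_le_bound _ hε.le fun z => ?_
      rw [Real.norm_eq_abs, abs_le]
      constructor
      · have := hclaim (-z); simp only [map_neg, norm_neg] at this; linarith
      · exact hclaim z
    linarith [hφ ▸ this]
  -- η x₀ = ‖η‖ and bounds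
  have hη0 : 0 ≤ η x₀ := by
    have := hcone 0 (mem_closedBall_self zero_le_one)
    simpa using this
  have hl1 : ‖η‖ ≤ η x₀ := by
    refine ContinuousLinearMap.opNorm_le_bound _ hη0 fun z => ?_
    rcases eq_or_ne z 0 with rfl | hz
    · simp
    · have hzn : 0 < ‖z‖ := norm_pos_iff.mpr hz
      set u : X := ‖z‖⁻¹ • z with hudef
      have huB : u ∈ B := by
        rw [hBdef, mem_closedBall_zero_iff, hudef, norm_smul, Real.norm_eq_abs,
          abs_of_nonneg (by positivity)]
        rw [inv_mul_cancel₀ hzn.ne']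
      have hunB : -u ∈ B := by
        rw [hBdef, mem_closedBall_zero_iff, norm_neg]
        exact mem_closedBall_zero_iff.mp huB
      have h1 : η u ≤ η x₀ := hcone u huB
      have h2 : η (-u) ≤ η x₀ := hcone _ hunB
      rw [map_neg] at h2
      have h3 : |η u| ≤ η x₀ := abs_le.mpr ⟨by linarith, h1⟩
      have h4 : η u = ‖z‖⁻¹ * η z := by rw [hudef, map_smul, smul_eq_mul]
      rw [h4, abs_mul, abs_of_nonneg (by positivity)] at h3
      rw [Real.norm_eq_abs]
      calc |η z| = ‖z‖ * (‖z‖⁻¹ * |η z|) := by field_simp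
      _ ≤ ‖z‖ * η x₀ := by exact mul_le_mul_of_nonneg_left h3 hzn.le
      _ = η x₀ * ‖z‖ := mul_comm _ _
  have hl2 : η x₀ ≤ ‖η‖ := by
    calc η x₀ ≤ |η x₀| := le_abs_self _
    _ ≤ ‖η‖ * ‖x₀‖ := η.le_opNorm x₀
    _ = ‖η‖ := by rw [hx₀norm, mul_one]
  have hleq : η x₀ = ‖η‖ := le_antisymm hl2 hl1
  have hnear : |‖η‖ - ‖φ‖| ≤ ε := (abs_norm_sub_norm_le η φ).trans hηφ
  have hlamlb : 1 - ε ≤ η x₀ := by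
    rw [hleq]
    have h := abs_le.mp hnear
    rw [hφ] at h
    linarith [h.1]
  have hlamub : η x₀ ≤ 1 + ε := by
    rw [hleq]
    have h := abs_le.mp hnear
    rw [hφ] at h
    linarith [h.2]
  have hlampos : 0 < η x₀ := by linarith
  refine ⟨hx₀norm, (η x₀)⁻¹ • η, ?_, ?_, ?_⟩
  · rw [norm_smul, Real.norm_eq_abs, abs_of_pos (by positivity), ← hleq]
    exact inv_mul_cancel₀ hlampos.ne'
  · rw [ContinuousLinearMap.smul_apply, smul_eq_mul]
    exact inv_mul_cancel₀ hlampos.ne'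
  · have hd1 : ‖(η x₀)⁻¹ • η - η‖ = |1 - η x₀| := by
      have e : (η x₀)⁻¹ • η - η = ((η x₀)⁻¹ - 1) • η := by
        ext z; simp only [ContinuousLinearMap.sub_apply, ContinuousLinearMap.smul_apply, smul_eq_mul]; ring
      rw [e, norm_smul, Real.norm_eq_abs, ← hleq]
      have e2 : |(η x₀)⁻¹ - 1| * η x₀ = |((η x₀)⁻¹ - 1) * η x₀| := by
        rw [abs_mul, abs_of_pos hlampos]
      rw [e2, show ((η x₀)⁻¹ - 1) * η x₀ = 1 - η x₀ from by field_simp]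
    have hd2 : |1 - η x₀| ≤ ε := by
      rw [abs_le]; constructor <;> linarith
    calc ‖(η x₀)⁻¹ • η - φ‖ ≤ ‖(η x₀)⁻¹ • η - η‖ + ‖η - φ‖ := by
          have := norm_add_le ((η x₀)⁻¹ • η - η) (η - φ); simpa using this
    _ ≤ ε + ε := add_le_add (hd1 ▸ hd2) hηφ
    _ = 2 * ε := by ring

end EK


section PsiSetup

variable {X : Type*} [NormedAddCommGroup X] [NormedSpace ℝ X]
variable {K : Type*} [TopologicalSpace K] [CompactSpace K]

/-- The signed evaluation functionals. -/
noncomputable def Psi (J : X →L[ℝ] C(K, ℝ)) (t : K) (σ : Bool) : StrongDual ℝ X :=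
  (cond σ (1:ℝ) (-1)) • ((ContinuousMap.evalCLM ℝ t).comp J)

lemma Psi_apply (J : X →L[ℝ] C(K, ℝ)) (t : K) (σ : Bool) (x : X) :
    Psi J t σ x = (cond σ (1:ℝ) (-1)) * (J x) t := rfl

lemma Psi_norm_le (J : X →L[ℝ] C(K, ℝ)) (hJ : ∀ x : X, ‖J x‖ = ‖x‖) (t : K) (σ : Bool) :
    ‖Psi J t σ‖ ≤ 1 := by
  refine ContinuousLinearMap.opNorm_le_bound _ zero_le_one fun x => ?_
  rw [Psi_apply, Real.norm_eq_abs, abs_mul, one_mul]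
  have h1 : |cond σ (1:ℝ) (-1)| = 1 := by cases σ <;> simp
  have h2 : |(J x) t| ≤ ‖J x‖ := by
    have := (J x).norm_coe_le_norm t
    simpa [Real.norm_eq_abs] using this
  rw [h1, one_mul, ← hJ x]
  exact h2

lemma exists_psi_eq_one (J : X →L[ℝ] C(K, ℝ)) (hJ : ∀ x : X, ‖J x‖ = ‖x‖)
    (x₀ : X) (hx₀ : ‖x₀‖ = 1) : ∃ (t : K) (σ : Bool), Psi J t σ x₀ = 1 := by
  have hKne : Nonempty K := by
    by_contra hK
    rw [not_nonempty_iff] at hK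
    have hz : J x₀ = 0 := by ext t; exact absurd (Nonempty.intro t) (by simpa using hK)
    have h := hJ x₀
    rw [hz, norm_zero, hx₀] at h
    exact one_ne_zero h.symm
  obtain ⟨t, -, ht⟩ := IsCompact.exists_isMaxOn (isCompact_univ (X := K)) Set.univ_nonempty
    (Continuous.continuousOn (f := fun t => |(J x₀) t|) ((map_continuous (J x₀)).abs))
  have hnorm : |(J x₀) t| = 1 := by
    have h1 : ‖J x₀‖ ≤ |(J x₀) t| := by
      refine (ContinuousMap.norm_le _ (abs_nonneg _)).mpr fun s => ?_
      simpa [Real.norm_eq_abs] using ht (Set.mem_univ s)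
    have h2 : |(J x₀) t| ≤ ‖J x₀‖ := by
      have := (J x₀).norm_coe_le_norm t
      simpa [Real.norm_eq_abs] using this
    rw [hJ x₀, hx₀] at h1 h2
    linarith
  rcases abs_eq (by norm_num : (0:ℝ) ≤ 1) |>.mp hnorm with h | h
  · exact ⟨t, true, by rw [Psi_apply]; simpa using h⟩
  · exact ⟨t, false, by rw [Psi_apply]; simp [h]⟩

end PsiSetup

section Key

variable {X : Type*} [NormedAddCommGroup X] [NormedSpace ℝ X]
variable {K : Type*} [TopologicalSpace K] [CompactSpace K]

lemma psi_approx [CompleteSpace X]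
    (hsmooth : ∀ x : X, ‖x‖ = 1 → ∃! f : StrongDual ℝ X, ‖f‖ = 1 ∧ f x = 1)
    (J : X →L[ℝ] C(K, ℝ)) (hJ : ∀ x : X, ‖J x‖ = ‖x‖)
    (φ : StrongDual ℝ X) (hφ : ‖φ‖ = 1) {ε : ℝ} (hε : 0 < ε) (hε1 : ε < 1) :
    ∃ (t : K) (σ : Bool), ‖Psi J t σ - φ‖ ≤ 2 * ε := by
  obtain ⟨x₀, hx₀B, hek⟩ := ekeland_ball φ hε
  obtain ⟨hx₀norm, g₀, hg₀norm, hg₀x₀, hg₀φ⟩ := exists_support_near φ hφ hε hε1 hx₀B hek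
  obtain ⟨t, σ, hψ⟩ := exists_psi_eq_one J hJ x₀ hx₀norm
  have hψnorm : ‖Psi J t σ‖ = 1 := by
    refine le_antisymm (Psi_norm_le J hJ t σ) ?_
    calc (1:ℝ) = Psi J t σ x₀ := hψ.symm
    _ ≤ |Psi J t σ x₀| := le_abs_self _
    _ ≤ ‖Psi J t σ‖ * ‖x₀‖ := (Psi J t σ).le_opNorm x₀
    _ = ‖Psi J t σ‖ := by rw [hx₀norm, mul_one]
  have := (hsmooth x₀ hx₀norm).unique ⟨hψnorm, hψ⟩ ⟨hg₀norm, hg₀x₀⟩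
  exact ⟨t, σ, this ▸ hg₀φ⟩

lemma psi_exact [CompleteSpace X]
    (hsmooth : ∀ x : X, ‖x‖ = 1 → ∃! f : StrongDual ℝ X, ‖f‖ = 1 ∧ f x = 1)
    (J : X →L[ℝ] C(K, ℝ)) (hJ : ∀ x : X, ‖J x‖ = ‖x‖)
    (φ : StrongDual ℝ X) (hφ : ‖φ‖ = 1) :
    ∃ (t : K) (σ : Bool), Psi J t σ = φ := by
  set A : ℕ → Set (K × Bool) :=
    fun n => {pr | ‖Psi J pr.1 pr.2 - φ‖ ≤ 2/(n+2)} with hAdef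
  have hclosed : ∀ n, IsClosed (A n) := by
    intro n
    have he : A n = ⋂ x : X, {pr : K × Bool | ‖(Psi J pr.1 pr.2) x - φ x‖ ≤ 2/(n+2) * ‖x‖} := by
      ext pr
      rw [hAdef, Set.mem_setOf_eq, Set.mem_iInter]
      constructor
      · intro h x
        have := (Psi J pr.1 pr.2 - φ).le_opNorm x
        rw [ContinuousLinearMap.sub_apply] at this
        exact Set.mem_setOf_eq ▸ this.trans (by nlinarith [norm_nonneg x])
      · intro h
        refine ContinuousLinearMap.opNorm_le_bound _ (by positivity) fun x => ?_
        rw [ContinuousLinearMap.sub_apply]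
        exact h x
    rw [he]
    refine isClosed_iInter fun x => ?_
    refine isClosed_le ?_ continuous_const
    have hc : Continuous fun pr : K × Bool => (Psi J pr.1 pr.2) x - φ x := by
      have h1 : Continuous fun pr : K × Bool => (cond pr.2 (1:ℝ) (-1)) :=
        Continuous.comp
          (continuous_of_discreteTopology : Continuous fun σ : Bool => (cond σ (1:ℝ) (-1)))
          continuous_snd
      have h2 : Continuous fun pr : K × Bool => (J x) pr.1 :=
        (map_continuous (J x)).comp continuous_fst
      exact (h1.mul h2).sub continuous_const
    exact hc.norm
  have hanti : ∀ m n, m ≤ n → A n ⊆ A m := by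
    intro m n hmn pr hpr
    rw [hAdef, Set.mem_setOf_eq] at hpr ⊢
    refine hpr.trans ?_
    have hc : (m:ℝ) + 2 ≤ (n:ℝ) + 2 := by exact_mod_cast Nat.add_le_add_right hmn 2
    exact div_le_div_of_nonneg_left (by norm_num) (by positivity) hc
  have hne : ∀ n : ℕ, (A n).Nonempty := by
    intro n
    have h1 : (0:ℝ) < 1/(n+2) := by positivity
    have h2 : (1:ℝ)/(n+2) < 1 := by
      rw [div_lt_one (by positivity)]
      have := Nat.cast_nonneg (α := ℝ) n
      linarith
    obtain ⟨t, σ, h⟩ := psi_approx hsmooth J hJ φ hφ h1 h2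
    refine ⟨(t, σ), ?_⟩
    rw [hAdef, Set.mem_setOf_eq]
    calc ‖Psi J t σ - φ‖ ≤ 2 * (1/(n+2)) := h
    _ = 2/(n+2) := by ring
  obtain ⟨⟨t, σ⟩, hmem⟩ := IsCompact.nonempty_iInter_of_directed_nonempty_isCompact_isClosed A
    (fun m n => ⟨max m n, hanti m _ (le_max_left m n), hanti n _ (le_max_right m n)⟩)
    hne (fun n => (hclosed n).isCompact) hclosed
  have hbound : ∀ n : ℕ, ‖Psi J t σ - φ‖ ≤ 2/(n+2) := fun n => Set.mem_iInter.mp hmem n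
  have hzero : ‖Psi J t σ - φ‖ ≤ 0 := by
    refine le_of_forall_pos_le_add fun δ hδ => ?_
    obtain ⟨n, hn⟩ := exists_nat_one_div_lt (by positivity : (0:ℝ) < δ/2)
    have h2 : (2:ℝ)/(n+2) ≤ 2/(n+1) := by
      refine div_le_div_of_nonneg_left (by norm_num) (by positivity) ?_
      have := Nat.cast_nonneg (α := ℝ) n
      linarith
    have h3 : (2:ℝ)/(n+1) = 2 * (1/(n+1)) := by ring
    linarith [hbound n]
  refine ⟨t, σ, ?_⟩
  rw [← sub_eq_zero]
  exact norm_le_zero_iff.mp hzero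

end Key

section Main

variable {X : Type*} [NormedAddCommGroup X] [NormedSpace ℝ X]
variable {K : Type*} [TopologicalSpace K] [CompactSpace K]

lemma findim_of_dual_findim (h : FiniteDimensional ℝ (StrongDual ℝ X)) : FiniteDimensional ℝ X := by
  have h2 : FiniteDimensional ℝ (StrongDual ℝ (StrongDual ℝ X)) := inferInstance
  exact FiniteDimensional.of_injective (inclusionInDoubleDualLi ℝ (E := X)).toLinearMap
    (inclusionInDoubleDualLi ℝ (E := X)).injective

lemma exists_annihilator (hnot : ¬FiniteDimensional ℝ X) (F : Finset X) :
    ∃ η : StrongDual ℝ X, η ≠ 0 ∧ ∀ x ∈ F, η x = 0 := by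
  by_contra hcon
  push_neg at hcon
  have hvanish : ∀ η : StrongDual ℝ X, (∀ x ∈ F, η x = 0) → η = 0 := by
    intro η hη
    by_contra hne
    obtain ⟨x, hx, hxe⟩ := hcon η hne
    exact hxe (hη x hx)
  set T : StrongDual ℝ X →ₗ[ℝ] (F → ℝ) :=
    { toFun := fun η x => η x.1
      map_add' := fun a b => by ext x; simp
      map_smul' := fun c a => by ext x; simp } with hTdef
  have hinj : Function.Injective T := by
    intro a b hab
    have hz : a - b = 0 := by
      refine hvanish _ fun x hx => ?_
      have h1 : a x = b x := congrFun hab ⟨x, hx⟩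
      simp [ContinuousLinearMap.sub_apply, h1]
    exact sub_eq_zero.mp hz
  have : FiniteDimensional ℝ (StrongDual ℝ X) := FiniteDimensional.of_injective T hinj
  exact hnot (findim_of_dual_findim this)

lemma exists_sphere_agree (hnot : ¬FiniteDimensional ℝ X)
    (φ : StrongDual ℝ X) (hφ : ‖φ‖ ≤ 1) (F : Finset X) :
    ∃ ψ : StrongDual ℝ X, ‖ψ‖ = 1 ∧ ∀ x ∈ F, ψ x = φ x := by
  obtain ⟨η, hη0, hηv⟩ := exists_annihilator hnot F
  have hηn : 0 < ‖η‖ := norm_pos_iff.mpr hη0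
  set f : ℝ → ℝ := fun s => ‖φ + s • η‖ with hfdef
  have hfc : Continuous f := by
    have h : Continuous fun s : ℝ => φ + s • η :=
      continuous_const.add (continuous_id.smul continuous_const)
    exact h.norm
  have hf0 : f 0 ≤ 1 := by
    have : f 0 = ‖φ‖ := by simp [hfdef]
    rw [this]; exact hφ
  set s₀ : ℝ := 2/‖η‖ with hs₀
  have hs₀p : (0:ℝ) ≤ s₀ := by positivity
  have hf1 : 1 ≤ f s₀ := by
    have h1 : ‖s₀ • η‖ = 2 := by
      rw [norm_smul, Real.norm_eq_abs, hs₀, abs_of_pos (by positivity)]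
      field_simp
    have h2 : ‖s₀ • η‖ ≤ ‖φ + s₀ • η‖ + ‖φ‖ := by
      have := norm_sub_le (φ + s₀ • η) φ
      simpa using this
    simp only [hfdef]
    linarith
  obtain ⟨s, -, hs⟩ := intermediate_value_Icc hs₀p hfc.continuousOn ⟨hf0, hf1⟩
  refine ⟨φ + s • η, hs, fun x hx => ?_⟩
  rw [ContinuousLinearMap.add_apply, ContinuousLinearMap.smul_apply, hηv x hx]
  simp

lemma psi_mem_union (J : X →L[ℝ] C(K, ℝ)) {φ : StrongDual ℝ X} (t : K) (σ : Bool)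
    (h : Psi J t σ = φ) :
    φ ∈ {φ : StrongDual ℝ X | ∃ t : K, ∀ x : X, φ x = J x t} ∪
      -{φ : StrongDual ℝ X | ∃ t : K, ∀ x : X, φ x = J x t} := by
  cases σ with
  | false =>
    right
    rw [Set.mem_neg]
    refine ⟨t, fun x => ?_⟩
    have hx : φ x = Psi J t false x := by rw [h]
    rw [Psi_apply] at hx
    simp only [ContinuousLinearMap.neg_apply]
    rw [hx]; simp
  | true =>
    left
    refine ⟨t, fun x => ?_⟩
    have hx : φ x = Psi J t true x := by rw [h]
    rw [Psi_apply] at hx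
    rw [hx]; simp

end Main

/-- Let `X` be Gâteaux smooth and `J : X → C(K)` a linear isometric
embedding. Then `S_{X*} ⊆ J*(K) ∪ (−J*(K))`; moreover if `X` is infinite-dimensional then
`B_{X*} = J*(K) ∪ (−J*(K))`. -/
theorem sphere_covered_by_adjoint_image
    {K : Type*} [TopologicalSpace K] [CompactSpace K] [T2Space K]
    {X : Type*} [NormedAddCommGroup X] [NormedSpace ℝ X] [CompleteSpace X]
    (hsmooth : ∀ x : X, ‖x‖ = 1 →
      ∃! f : StrongDual ℝ X, ‖f‖ = 1 ∧ f x = 1)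
    (J : X →L[ℝ] C(K, ℝ)) (hJ : ∀ x : X, ‖J x‖ = ‖x‖) :
    (Metric.sphere (0 : StrongDual ℝ X) 1 ⊆
      {φ : StrongDual ℝ X | ∃ t : K, ∀ x : X, φ x = J x t} ∪
      -{φ : StrongDual ℝ X | ∃ t : K, ∀ x : X, φ x = J x t}) ∧
    (¬ FiniteDimensional ℝ X →
      Metric.closedBall (0 : StrongDual ℝ X) 1 =
        {φ : StrongDual ℝ X | ∃ t : K, ∀ x : X, φ x = J x t} ∪
        -{φ : StrongDual ℝ X | ∃ t : K, ∀ x : X, φ x = J x t}) := by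
  classical
  constructor
  · intro φ hφmem
    have hφ : ‖φ‖ = 1 := by simpa using mem_sphere_zero_iff_norm.mp hφmem
    obtain ⟨t, σ, hts⟩ := psi_exact hsmooth J hJ φ hφ
    exact psi_mem_union J t σ hts
  · intro hinf
    apply Set.Subset.antisymm
    · intro φ hφmem
      have hφ : ‖φ‖ ≤ 1 := mem_closedBall_zero_iff.mp hφmem
      set A : Finset X → Set (K × Bool) :=
        fun F => ⋂ x ∈ F, {pr : K × Bool | Psi J pr.1 pr.2 x = φ x} with hAdef
      have hclosed : ∀ F, IsClosed (A F) := by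
        intro F
        refine isClosed_biInter fun x _ => ?_
        refine isClosed_eq ?_ continuous_const
        have h1 : Continuous fun pr : K × Bool => (cond pr.2 (1:ℝ) (-1)) :=
          Continuous.comp
            (continuous_of_discreteTopology : Continuous fun σ : Bool => (cond σ (1:ℝ) (-1)))
            continuous_snd
        have h2 : Continuous fun pr : K × Bool => (J x) pr.1 :=
          (map_continuous (J x)).comp continuous_fst
        exact h1.mul h2
      have hne : ∀ F, (A F).Nonempty := by
        intro F
        obtain ⟨ψ, hψn, hψa⟩ := exists_sphere_agree hinf φ hφ F
        obtain ⟨t, σ, hts⟩ := psi_exact hsmooth J hJ ψ hψn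
        refine ⟨(t, σ), ?_⟩
        rw [hAdef, Set.mem_iInter₂]
        intro x hx
        rw [Set.mem_setOf_eq, hts]
        exact hψa x hx
      have hsub : ∀ F G : Finset X, F ⊆ G → A G ⊆ A F := by
        intro F G hFG pr hpr
        rw [hAdef, Set.mem_iInter₂] at hpr ⊢
        exact fun x hx => hpr x (hFG hx)
      obtain ⟨⟨t, σ⟩, hmem⟩ :=
        IsCompact.nonempty_iInter_of_directed_nonempty_isCompact_isClosed A
          (fun F G => ⟨F ∪ G, hsub F _ Finset.subset_union_left,
            hsub G _ Finset.subset_union_right⟩)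
          hne (fun F => (hclosed F).isCompact) hclosed
      have hall : ∀ x : X, Psi J t σ x = φ x := by
        intro x
        have h := Set.mem_iInter.mp hmem {x}
        rw [hAdef, Set.mem_iInter₂] at h
        exact h x (Finset.mem_singleton_self x)
      exact psi_mem_union J t σ (ContinuousLinearMap.ext hall)
    · intro φ hφmem
      rw [mem_closedBall_zero_iff]
      rcases hφmem with h | h
      · obtain ⟨t, ht⟩ := h
        refine ContinuousLinearMap.opNorm_le_bound _ zero_le_one fun x => ?_
        rw [ht x, one_mul, Real.norm_eq_abs, ← hJ x]
        have := (J x).norm_coe_le_norm t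
        simpa [Real.norm_eq_abs] using this
      · rw [Set.mem_neg] at h
        obtain ⟨t, ht⟩ := h
        rw [← norm_neg]
        refine ContinuousLinearMap.opNorm_le_bound _ zero_le_one fun x => ?_
        rw [ht x, one_mul, Real.norm_eq_abs, ← hJ x]
        have := (J x).norm_coe_le_norm t
        simpa [Real.norm_eq_abs] using this
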